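/- Let X, Y be integrable random variables with standardized versions X̃ = (X−EX)/E|X−EX| and Ỹ = (Y−EY)/E|Y−EY|. If e_{X̃}(α) ≤ e_{Ỹ}(α) for all α ∈ (0,1), then s_{2,X}(α) ≤ s_{2,Y}(α) for all α ∈ (0,1/2). -/

import Mathlib

open MeasureTheory Set

/-- The first-order condition identifying the `α`-expectile of a distribution `P` on `ℝ`. -/
def IsExpectile (P : Measure ℝ) (α t : ℝ) : Prop :=
  α * ∫ x, max (x - t) 0 ∂P = (1 - α) * ∫ x, max (t - x) 0 ∂P

namespace ExpAux

noncomputable def F (P : Measure ℝ) (α t : ℝ) : ℝ :=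
  α * ∫ x, max (x - t) 0 ∂P - (1 - α) * ∫ x, max (t - x) 0 ∂P

lemma isExpectile_iff_F {P : Measure ℝ} {α t : ℝ} : IsExpectile P α t ↔ F P α t = 0 := by
  unfold IsExpectile F; constructor <;> intro h <;> linarith

lemma intPos (P : Measure ℝ) [IsProbabilityMeasure P] (hI : Integrable id P) (t : ℝ) :
    Integrable (fun x => max (x - t) 0) P := by
  have h : Integrable (fun x : ℝ => x - t) P := hI.sub (integrable_const t)
  exact h.pos_part

lemma intNeg (P : Measure ℝ) [IsProbabilityMeasure P] (hI : Integrable id P) (t : ℝ) :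
    Integrable (fun x => max (t - x) 0) P := by
  have h : Integrable (fun x : ℝ => t - x) P := (integrable_const t).sub hI
  exact h.pos_part

lemma max_sub_max (a : ℝ) : max a 0 - max (-a) 0 = a := by
  rcases le_total a 0 with h | h
  · rw [max_eq_right h, max_eq_left (by linarith)]; ring
  · rw [max_eq_left h, max_eq_right (by linarith)]; ring

lemma max_add_max (a : ℝ) : max a 0 + max (-a) 0 = |a| := by
  rcases le_total a 0 with h | h
  · rw [max_eq_right h, max_eq_left (by linarith), abs_of_nonpos h]; ring
  · rw [max_eq_left h, max_eq_right (by linarith), abs_of_nonneg h]; ring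

lemma F_strictAnti (P : Measure ℝ) [IsProbabilityMeasure P] (hI : Integrable id P)
    {α : ℝ} (hα : α ∈ Ioo (0:ℝ) 1) {t s : ℝ} (hts : t < s) : F P α s < F P α t := by
  set m := min α (1 - α) with hm
  have hm0 : 0 < m := lt_min hα.1 (by linarith [hα.2])
  have h1 := intPos P hI t
  have h2 := intPos P hI s
  have h3 := intNeg P hI t
  have h4 := intNeg P hI s
  have key : F P α t - F P α s
      = ∫ x, (α * (max (x - t) 0 - max (x - s) 0)
          + (1 - α) * (max (s - x) 0 - max (t - x) 0)) ∂P := by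
    have hA : Integrable (fun x => α * (max (x - t) 0 - max (x - s) 0)) P :=
      (h1.sub h2).const_mul α
    have hB : Integrable (fun x => (1 - α) * (max (s - x) 0 - max (t - x) 0)) P :=
      (h4.sub h3).const_mul (1 - α)
    rw [integral_add hA hB, integral_const_mul, integral_const_mul,
      integral_sub h1 h2, integral_sub h4 h3]
    unfold F; ring
  have hpt : ∀ x : ℝ, m * (s - t) ≤ α * (max (x - t) 0 - max (x - s) 0)
      + (1 - α) * (max (s - x) 0 - max (t - x) 0) := by
    intro x
    have e1 : max (x - t) 0 - max (t - x) 0 = x - t := by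
      have := max_sub_max (x - t); rw [show -(x-t) = t - x by ring] at this; exact this
    have e2 : max (x - s) 0 - max (s - x) 0 = x - s := by
      have := max_sub_max (x - s); rw [show -(x-s) = s - x by ring] at this; exact this
    have g1 : 0 ≤ max (x - t) 0 - max (x - s) 0 :=
      sub_nonneg.2 (max_le_max (by linarith) le_rfl)
    have g2 : 0 ≤ max (s - x) 0 - max (t - x) 0 :=
      sub_nonneg.2 (max_le_max (by linarith) le_rfl)
    have hma : m ≤ α := min_le_left _ _
    have hmb : m ≤ 1 - α := min_le_right _ _
    nlinarith [mul_le_mul_of_nonneg_right hma g1, mul_le_mul_of_nonneg_right hmb g2]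
  have hint : Integrable (fun x => α * (max (x - t) 0 - max (x - s) 0)
      + (1 - α) * (max (s - x) 0 - max (t - x) 0)) P :=
    Integrable.add ((h1.sub h2).const_mul α) ((h4.sub h3).const_mul (1 - α))
  have hmono := integral_mono (μ := P) (integrable_const (m * (s - t))) hint hpt
  rw [integral_const] at hmono
  simp only [measure_univ, ENNReal.toReal_one, probReal_univ, one_smul] at hmono
  nlinarith [mul_pos hm0 (by linarith : (0:ℝ) < s - t)]

lemma expectile_unique (P : Measure ℝ) [IsProbabilityMeasure P] (hI : Integrable id P)
    {α t s : ℝ} (hα : α ∈ Ioo (0:ℝ) 1) (ht : IsExpectile P α t) (hs : IsExpectile P α s) :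
    t = s := by
  rw [isExpectile_iff_F] at ht hs
  by_contra h
  rcases lt_or_gt_of_ne h with h | h
  · have := F_strictAnti P hI hα h; linarith
  · have := F_strictAnti P hI hα h; linarith

lemma expectile_lt_of_F_neg (P : Measure ℝ) [IsProbabilityMeasure P] (hI : Integrable id P)
    {α t s : ℝ} (hα : α ∈ Ioo (0:ℝ) 1) (ht : IsExpectile P α t) (hs : F P α s < 0) :
    t < s := by
  rw [isExpectile_iff_F] at ht
  by_contra h
  push_neg at h
  rcases h.lt_or_eq with h | h
  · have := F_strictAnti P hI hα h; linarith
  · rw [h] at hs; linarith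

lemma expectile_gt_of_F_pos (P : Measure ℝ) [IsProbabilityMeasure P] (hI : Integrable id P)
    {α t s : ℝ} (hα : α ∈ Ioo (0:ℝ) 1) (ht : IsExpectile P α t) (hs : 0 < F P α s) :
    s < t := by
  rw [isExpectile_iff_F] at ht
  by_contra h
  push_neg at h
  rcases h.lt_or_eq with h | h
  · have := F_strictAnti P hI hα h; linarith
  · rw [← h] at hs; linarith

lemma F_at_mean (P : Measure ℝ) [IsProbabilityMeasure P] (hI : Integrable id P)
    {m d : ℝ} (α : ℝ) (hm : m = ∫ x, x ∂P) (hd : d = ∫ x, |x - m| ∂P) :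
    F P α m = (2 * α - 1) * d / 2 := by
  have h1 := intPos P hI m
  have h2 := intNeg P hI m
  have hdiff : (∫ x, max (x - m) 0 ∂P) - (∫ x, max (m - x) 0 ∂P) = 0 := by
    rw [← integral_sub h1 h2]
    have : ∀ x : ℝ, max (x - m) 0 - max (m - x) 0 = x - m := by
      intro x
      have := max_sub_max (x - m); rw [show -(x-m) = m - x by ring] at this; exact this
    have hI' : Integrable (fun x : ℝ => x) P := hI
    rw [integral_congr_ae (Filter.Eventually.of_forall this),
      integral_sub hI' (integrable_const m), integral_const]
    simp [hm]
  have hsum : (∫ x, max (x - m) 0 ∂P) + (∫ x, max (m - x) 0 ∂P) = d := by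
    rw [← integral_add h1 h2]
    have : ∀ x : ℝ, max (x - m) 0 + max (m - x) 0 = |x - m| := by
      intro x
      have := max_add_max (x - m); rw [show -(x-m) = m - x by ring] at this; exact this
    rw [integral_congr_ae (Filter.Eventually.of_forall this), hd]
  unfold F; linear_combination (α - 1/2) * hsum + (1/2) * hdiff

lemma isExpectile_map {P : Measure ℝ} {m d α s : ℝ} (hd : 0 < d)
    (h : IsExpectile (P.map fun x => (x - m) / d) α s) : IsExpectile P α (m + d * s) := by
  have hmeas : Measurable fun x : ℝ => (x - m) / d := by fun_prop
  have key : ∀ c u : ℝ, (∀ x : ℝ, (x - m) / d - c = (x - u) / d) →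
      ∫ x, max (x - c) 0 ∂(P.map fun x => (x - m) / d) = (1/d) * ∫ x, max (x - u) 0 ∂P := by
    intro c u hcu
    have hg : AEStronglyMeasurable (fun x : ℝ => max (x - c) 0)
        (P.map fun x => (x - m) / d) := Continuous.aestronglyMeasurable (by continuity)
    rw [integral_map hmeas.aemeasurable hg, ← integral_const_mul]
    congr 1; ext x
    rw [hcu x, show (1:ℝ)/d * (max (x - u) 0) = (max (x - u) 0)/d from by ring,
      ← max_div_div_right hd.le, zero_div]
  have key2 : ∀ c u : ℝ, (∀ x : ℝ, c - (x - m) / d = (u - x) / d) →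
      ∫ x, max (c - x) 0 ∂(P.map fun x => (x - m) / d) = (1/d) * ∫ x, max (u - x) 0 ∂P := by
    intro c u hcu
    have hg : AEStronglyMeasurable (fun x : ℝ => max (c - x) 0)
        (P.map fun x => (x - m) / d) := Continuous.aestronglyMeasurable (by continuity)
    rw [integral_map hmeas.aemeasurable hg, ← integral_const_mul]
    congr 1; ext x
    rw [hcu x, show (1:ℝ)/d * (max (u - x) 0) = (max (u - x) 0)/d from by ring,
      ← max_div_div_right hd.le, zero_div]
  unfold IsExpectile at h ⊢
  rw [key s (m + d * s) (fun x => by field_simp; ring),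
    key2 s (m + d * s) (fun x => by field_simp; ring)] at h
  have hd' : (1:ℝ)/d ≠ 0 := by positivity
  have h2 : (1/d) * (α * ∫ x, max (x - (m + d * s)) 0 ∂P)
      = (1/d) * ((1 - α) * ∫ x, max ((m + d * s) - x) 0 ∂P) := by linarith
  exact mul_left_cancel₀ hd' h2

lemma ratio_mono {a b a' b' c : ℝ} (hc : 0 < c) (ha : 0 < a) (hb : b < 0)
    (ha' : 0 < a') (hb' : b' < 0) (h1 : a ≤ a') (h2 : b ≤ b') :
    (a + b) / (c * (a - b)) ≤ (a' + b') / (c * (a' - b')) := by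
  have hab : 0 < a - b := by linarith
  have hab' : 0 < a' - b' := by linarith
  rw [div_le_div_iff₀ (mul_pos hc hab) (mul_pos hc hab')]
  have h3 : a' * b ≤ a' * b' := mul_le_mul_of_nonneg_left h2 ha'.le
  have h4 : a' * b' ≤ a * b' := mul_le_mul_of_nonpos_right h1 hb'.le
  nlinarith [mul_nonneg hc.le (by linarith : (0:ℝ) ≤ a * b' - a' * b)]

end ExpAux

open ExpAux

/-- if the expectiles of the standardized versions
`X̃ = (X−EX)/E|X−EX|` and `Ỹ = (Y−EY)/E|Y−EY|` are pointwise ordered on `(0,1)`, then the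
normalized expectile skewness measures satisfy `s₂,X(α) ≤ s₂,Y(α)` for all `α ∈ (0,1/2)`. -/
theorem s2_monotone_of_standardized_expectile_order
    (P Q : Measure ℝ) [IsProbabilityMeasure P] [IsProbabilityMeasure Q]
    (hIP : Integrable id P) (hIQ : Integrable id Q)
    (mP mQ dP dQ : ℝ)
    (hmP : mP = ∫ x, x ∂P) (hmQ : mQ = ∫ x, x ∂Q)
    (hdP : dP = ∫ x, |x - mP| ∂P) (hdQ : dQ = ∫ x, |x - mQ| ∂Q)
    (hdP0 : 0 < dP) (hdQ0 : 0 < dQ)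
    (eP eQ ePt eQt : ℝ → ℝ)
    (heP : ∀ α ∈ Ioo (0 : ℝ) 1, IsExpectile P α (eP α))
    (heQ : ∀ α ∈ Ioo (0 : ℝ) 1, IsExpectile Q α (eQ α))
    (hePt : ∀ α ∈ Ioo (0 : ℝ) 1,
      IsExpectile (P.map fun x => (x - mP) / dP) α (ePt α))
    (heQt : ∀ α ∈ Ioo (0 : ℝ) 1,
      IsExpectile (Q.map fun x => (x - mQ) / dQ) α (eQt α))
    (hord : ∀ α ∈ Ioo (0 : ℝ) 1, ePt α ≤ eQt α) :
    ∀ α ∈ Ioo (0 : ℝ) (1 / 2),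
      (eP (1 - α) + eP α - 2 * mP) / ((1 - 2 * α) * (eP (1 - α) - eP α)) ≤
      (eQ (1 - α) + eQ α - 2 * mQ) / ((1 - 2 * α) * (eQ (1 - α) - eQ α)) := by
  intro α hα
  obtain ⟨hα0, hα2⟩ := hα
  have hα1 : α ∈ Ioo (0:ℝ) 1 := ⟨hα0, by linarith⟩
  have hβ1 : 1 - α ∈ Ioo (0:ℝ) 1 := ⟨by linarith, by linarith⟩
  -- relations between eP and ePt
  have uP : ∀ γ ∈ Ioo (0:ℝ) 1, eP γ = mP + dP * ePt γ := fun γ hγ =>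
    expectile_unique P hIP hγ (heP γ hγ) (isExpectile_map hdP0 (hePt γ hγ))
  have uQ : ∀ γ ∈ Ioo (0:ℝ) 1, eQ γ = mQ + dQ * eQt γ := fun γ hγ =>
    expectile_unique Q hIQ hγ (heQ γ hγ) (isExpectile_map hdQ0 (heQt γ hγ))
  -- sign conditions
  have hFPα : F P α mP < 0 := by
    rw [F_at_mean P hIP α hmP hdP]; nlinarith
  have hFPβ : 0 < F P (1 - α) mP := by
    rw [F_at_mean P hIP (1 - α) hmP hdP]; nlinarith
  have hFQα : F Q α mQ < 0 := by
    rw [F_at_mean Q hIQ α hmQ hdQ]; nlinarith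
  have hFQβ : 0 < F Q (1 - α) mQ := by
    rw [F_at_mean Q hIQ (1 - α) hmQ hdQ]; nlinarith
  have hPα : eP α < mP := expectile_lt_of_F_neg P hIP hα1 (heP α hα1) hFPα
  have hPβ : mP < eP (1 - α) := expectile_gt_of_F_pos P hIP hβ1 (heP _ hβ1) hFPβ
  have hQα : eQ α < mQ := expectile_lt_of_F_neg Q hIQ hα1 (heQ α hα1) hFQα
  have hQβ : mQ < eQ (1 - α) := expectile_gt_of_F_pos Q hIQ hβ1 (heQ _ hβ1) hFQβ
  have huPα := uP α hα1
  have huPβ := uP (1 - α) hβ1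
  have huQα := uQ α hα1
  have huQβ := uQ (1 - α) hβ1
  have hbP : ePt α < 0 := by nlinarith
  have haP : 0 < ePt (1 - α) := by nlinarith
  have hbQ : eQt α < 0 := by nlinarith
  have haQ : 0 < eQt (1 - α) := by nlinarith
  have hc : 0 < 1 - 2 * α := by linarith
  have eqP : (eP (1 - α) + eP α - 2 * mP) / ((1 - 2 * α) * (eP (1 - α) - eP α))
      = (ePt (1 - α) + ePt α) / ((1 - 2 * α) * (ePt (1 - α) - ePt α)) := by
    rw [huPα, huPβ,
      show mP + dP * ePt (1 - α) + (mP + dP * ePt α) - 2 * mP = dP * (ePt (1 - α) + ePt α)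
        from by ring,
      show (1 - 2 * α) * (mP + dP * ePt (1 - α) - (mP + dP * ePt α))
          = dP * ((1 - 2 * α) * (ePt (1 - α) - ePt α)) from by ring,
      mul_div_mul_left _ _ (ne_of_gt hdP0)]
  have eqQ : (eQ (1 - α) + eQ α - 2 * mQ) / ((1 - 2 * α) * (eQ (1 - α) - eQ α))
      = (eQt (1 - α) + eQt α) / ((1 - 2 * α) * (eQt (1 - α) - eQt α)) := by
    rw [huQα, huQβ,
      show mQ + dQ * eQt (1 - α) + (mQ + dQ * eQt α) - 2 * mQ = dQ * (eQt (1 - α) + eQt α)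
        from by ring,
      show (1 - 2 * α) * (mQ + dQ * eQt (1 - α) - (mQ + dQ * eQt α))
          = dQ * ((1 - 2 * α) * (eQt (1 - α) - eQt α)) from by ring,
      mul_div_mul_left _ _ (ne_of_gt hdQ0)]
  rw [eqP, eqQ]
  exact ratio_mono hc haP hbP haQ hbQ (hord _ hβ1) (hord _ hα1)
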